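/- Two defining triples (G₁, H₁, θ₁) and (G₂, H₂, θ₂) on finite vertex sets are equivalent (there is a vertex bijection T intertwining both pairs of adjacency matrices and compatible with θ₁, θ₂) if and only if the associated rank-2 graphs Λ₁ and Λ₂ are isomorphic as ℕ²-graded categories. -/

import Mathlib

open CategoryTheory

/-- A 2-graph (rank-2 graph): a category with an `ℕ²`-valued degree functor
satisfying the unique factorisation property. -/
structure TwoGraphStr (Λ : Type*) [Category Λ] where
  d : ∀ {x y : Λ}, (x ⟶ y) → ℕ × ℕ
  d_id : ∀ x : Λ, d (𝟙 x) = 0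
  d_comp : ∀ {x y z : Λ} (f : x ⟶ y) (g : y ⟶ z), d (f ≫ g) = d f + d g
  factor : ∀ {x z : Λ} (h : x ⟶ z) (m n : ℕ × ℕ), d h = m + n →
    ∃! p : Σ y : Λ, (x ⟶ y) × (y ⟶ z),
      d p.2.1 = m ∧ d p.2.2 = n ∧ p.2.1 ≫ p.2.2 = h

/-- A defining triple: two 1-graphs without multiple edges, sources or sinks on a
common finite vertex set (edges are `(source, target)` pairs), together with a
range/source-compatible bijection `θ : E₁ ⋆ E₂ → E₂ ⋆ E₁` between composable
pairs (whose existence encodes commutation of the adjacency matrices). -/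
structure Triple (V : Type*) [Fintype V] [DecidableEq V] where
  E₁ : Finset (V × V)
  E₂ : Finset (V × V)
  noSourceSink₁ : ∀ v : V, (∃ w, (v, w) ∈ E₁) ∧ (∃ w, (w, v) ∈ E₁)
  noSourceSink₂ : ∀ v : V, (∃ w, (v, w) ∈ E₂) ∧ (∃ w, (w, v) ∈ E₂)
  θ : (V × V) × (V × V) → (V × V) × (V × V)
  θ_compat : ∀ x : (V × V) × (V × V), x.1 ∈ E₁ → x.2 ∈ E₂ → x.1.1 = x.2.2 →
    (θ x).1 ∈ E₂ ∧ (θ x).2 ∈ E₁ ∧ (θ x).1.1 = (θ x).2.2 ∧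
    (θ x).1.2 = x.1.2 ∧ (θ x).2.1 = x.2.1
  θ_bij : Set.BijOn θ {x | x.1 ∈ E₁ ∧ x.2 ∈ E₂ ∧ x.1.1 = x.2.2}
    {y | y.1 ∈ E₂ ∧ y.2 ∈ E₁ ∧ y.1.1 = y.2.2}

/-- Equivalence of triples: a vertex bijection intertwining both pairs of
adjacency matrices, compatible with the factorisation bijections. -/
def TripleEquiv {V : Type*} [Fintype V] [DecidableEq V] (T₁ T₂ : Triple V) : Prop :=
  ∃ σ : Equiv.Perm V,
    (∀ p : V × V, p ∈ T₂.E₁ ↔ (σ p.1, σ p.2) ∈ T₁.E₁) ∧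
    (∀ p : V × V, p ∈ T₂.E₂ ↔ (σ p.1, σ p.2) ∈ T₁.E₂) ∧
    (∀ x : (V × V) × (V × V), x.1 ∈ T₂.E₁ → x.2 ∈ T₂.E₂ → x.1.1 = x.2.2 →
      T₁.θ ((σ x.1.1, σ x.1.2), (σ x.2.1, σ x.2.2)) =
        ((σ (T₂.θ x).1.1, σ (T₂.θ x).1.2), (σ (T₂.θ x).2.1, σ (T₂.θ x).2.2)))

/-- `T` is a defining triple of the 2-graph `G` on `Λ`: objects are identified
with the vertices, degree-(1,0) (resp. (0,1)) morphisms with the edges of the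
first (resp. second) graph (uniquely, as there are no multiple edges), and the
factorisation of degree-(1,1) morphisms is governed by `θ`. -/
def IsDefiningTriple {V : Type*} [Fintype V] [DecidableEq V]
    {Λ : Type*} [Category Λ] (G : TwoGraphStr Λ) (T : Triple V) : Prop :=
  ∃ ob : V ≃ Λ,
    (∀ a b : V, ((a, b) ∈ T.E₁ ↔ ∃ f : ob a ⟶ ob b, G.d f = (1, 0))) ∧
    (∀ a b : V, ∀ f g : ob a ⟶ ob b, G.d f = (1, 0) → G.d g = (1, 0) → f = g) ∧
    (∀ a b : V, ((a, b) ∈ T.E₂ ↔ ∃ f : ob a ⟶ ob b, G.d f = (0, 1))) ∧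
    (∀ a b : V, ∀ f g : ob a ⟶ ob b, G.d f = (0, 1) → G.d g = (0, 1) → f = g) ∧
    (∀ (x : (V × V) × (V × V)) (h₁ : x.1 ∈ T.E₁) (h₂ : x.2 ∈ T.E₂)
      (hc : x.1.1 = x.2.2)
      (me : ob x.1.1 ⟶ ob x.1.2) (mf : ob x.2.1 ⟶ ob x.2.2)
      (me' : ob (T.θ x).2.1 ⟶ ob (T.θ x).2.2)
      (mf' : ob (T.θ x).1.1 ⟶ ob (T.θ x).1.2),
      G.d me = (1, 0) → G.d mf = (0, 1) → G.d me' = (1, 0) → G.d mf' = (0, 1) →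
      mf ≫ eqToHom (congrArg ob hc.symm) ≫ me =
        eqToHom (congrArg ob (T.θ_compat x h₁ h₂ hc).2.2.2.2.symm) ≫ me' ≫
          eqToHom (congrArg ob (T.θ_compat x h₁ h₂ hc).2.2.1.symm) ≫ mf' ≫
            eqToHom (congrArg ob (T.θ_compat x h₁ h₂ hc).2.2.2.1))

namespace TwoGraphStr

variable {Λ : Type*} [Category Λ] (G : TwoGraphStr Λ)

lemma d_eqToHom {x y : Λ} (h : x = y) : G.d (eqToHom h) = 0 := by
  subst h; simpa using G.d_id x

lemma exists_eq_of_d_eq_zero {x y : Λ} (f : x ⟶ y) (h : G.d f = 0) :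
    ∃ h' : x = y, f = eqToHom h' := by
  obtain ⟨p, hp, hu⟩ := G.factor f 0 0 (by simp [h])
  have h1 := hu ⟨y, f, 𝟙 y⟩ ⟨h, G.d_id y, Category.comp_id f⟩
  have h2 := hu ⟨x, 𝟙 x, f⟩ ⟨G.d_id x, h, Category.id_comp f⟩
  obtain ⟨hxy, hff⟩ := Sigma.mk.inj_iff.mp (h1.trans h2.symm)
  subst hxy
  refine ⟨rfl, ?_⟩
  have := heq_iff_eq.mp hff
  have := (Prod.mk.injEq _ _ _ _).mp this
  simpa using this.1

lemma strip1 {x z : Λ} (f : x ⟶ z) (h : 1 ≤ (G.d f).1) :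
    ∃ p : Σ y : Λ, (x ⟶ y) × (y ⟶ z),
      G.d p.2.1 = (1, 0) ∧ G.d p.2.2 = ((G.d f).1 - 1, (G.d f).2) ∧
        p.2.1 ≫ p.2.2 = f := by
  obtain ⟨p, hp, _⟩ := G.factor f (1, 0) ((G.d f).1 - 1, (G.d f).2)
    (by simp [Prod.ext_iff]; omega)
  exact ⟨p, hp⟩

lemma strip2 {x z : Λ} (f : x ⟶ z) (h : 1 ≤ (G.d f).2) :
    ∃ p : Σ y : Λ, (x ⟶ y) × (y ⟶ z),
      G.d p.2.1 = (0, 1) ∧ G.d p.2.2 = ((G.d f).1, (G.d f).2 - 1) ∧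
        p.2.1 ≫ p.2.2 = f := by
  obtain ⟨p, hp, _⟩ := G.factor f (0, 1) ((G.d f).1, (G.d f).2 - 1)
    (by simp [Prod.ext_iff]; omega)
  exact ⟨p, hp⟩

/-- Uniqueness of a factorisation with prescribed degrees. -/
lemma factor_unique {x z : Λ} {f : x ⟶ z} {m n : ℕ × ℕ}
    (p q : Σ y : Λ, (x ⟶ y) × (y ⟶ z))
    (hp : G.d p.2.1 = m ∧ G.d p.2.2 = n ∧ p.2.1 ≫ p.2.2 = f)
    (hq : G.d q.2.1 = m ∧ G.d q.2.2 = n ∧ q.2.1 ≫ q.2.2 = f) : p = q := by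
  have hd : G.d f = m + n := by
    rw [← hp.2.2, G.d_comp, hp.1, hp.2.1]
  obtain ⟨r, hr, hu⟩ := G.factor f m n hd
  rw [hu p hp, hu q hq]

end TwoGraphStr
/-- Bundled form of `IsDefiningTriple`. -/
structure DT {V : Type*} [Fintype V] [DecidableEq V]
    {Λ : Type*} [Category Λ] (G : TwoGraphStr Λ) (T : Triple V) where
  ob : V ≃ Λ
  mem1 : ∀ a b : V, ((a, b) ∈ T.E₁ ↔ ∃ f : ob a ⟶ ob b, G.d f = (1, 0))
  uniq1 : ∀ a b : V, ∀ f g : ob a ⟶ ob b, G.d f = (1, 0) → G.d g = (1, 0) → f = g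
  mem2 : ∀ a b : V, ((a, b) ∈ T.E₂ ↔ ∃ f : ob a ⟶ ob b, G.d f = (0, 1))
  uniq2 : ∀ a b : V, ∀ f g : ob a ⟶ ob b, G.d f = (0, 1) → G.d g = (0, 1) → f = g
  theta : ∀ (x : (V × V) × (V × V)) (h₁ : x.1 ∈ T.E₁) (h₂ : x.2 ∈ T.E₂)
      (hc : x.1.1 = x.2.2)
      (me : ob x.1.1 ⟶ ob x.1.2) (mf : ob x.2.1 ⟶ ob x.2.2)
      (me' : ob (T.θ x).2.1 ⟶ ob (T.θ x).2.2)
      (mf' : ob (T.θ x).1.1 ⟶ ob (T.θ x).1.2),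
      G.d me = (1, 0) → G.d mf = (0, 1) → G.d me' = (1, 0) → G.d mf' = (0, 1) →
      mf ≫ eqToHom (congrArg ob hc.symm) ≫ me =
        eqToHom (congrArg ob (T.θ_compat x h₁ h₂ hc).2.2.2.2.symm) ≫ me' ≫
          eqToHom (congrArg ob (T.θ_compat x h₁ h₂ hc).2.2.1.symm) ≫ mf' ≫
            eqToHom (congrArg ob (T.θ_compat x h₁ h₂ hc).2.2.2.1)

lemma isDefiningTriple_iff_nonempty_dt {V : Type*} [Fintype V] [DecidableEq V]
    {Λ : Type*} [Category Λ] (G : TwoGraphStr Λ) (T : Triple V) :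
    IsDefiningTriple G T ↔ Nonempty (DT G T) := by
  constructor
  · rintro ⟨ob, a1, a2, a3, a4, a5⟩; exact ⟨⟨ob, a1, a2, a3, a4, a5⟩⟩
  · rintro ⟨⟨ob, a1, a2, a3, a4, a5⟩⟩; exact ⟨ob, a1, a2, a3, a4, a5⟩

namespace DT

variable {V : Type*} [Fintype V] [DecidableEq V]
  {Λ : Type*} [Category Λ] {G : TwoGraphStr Λ} {T : Triple V}

/-- A degree-(1,0) morphism anywhere gives an edge of `E₁`. -/
lemma mem1_of_hom (D : DT G T) {x y : Λ} (f : x ⟶ y) (hf : G.d f = (1, 0)) :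
    (D.ob.symm x, D.ob.symm y) ∈ T.E₁ := by
  rw [D.mem1]
  refine ⟨eqToHom (D.ob.apply_symm_apply x) ≫ f ≫
    eqToHom (D.ob.apply_symm_apply y).symm, ?_⟩
  simp [G.d_comp, G.d_eqToHom, hf]

lemma mem2_of_hom (D : DT G T) {x y : Λ} (f : x ⟶ y) (hf : G.d f = (0, 1)) :
    (D.ob.symm x, D.ob.symm y) ∈ T.E₂ := by
  rw [D.mem2]
  refine ⟨eqToHom (D.ob.apply_symm_apply x) ≫ f ≫
    eqToHom (D.ob.apply_symm_apply y).symm, ?_⟩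
  simp [G.d_comp, G.d_eqToHom, hf]

/-- Uniqueness of degree-(1,0) morphisms between arbitrary objects. -/
lemma uniq1' (D : DT G T) {x y : Λ} (f g : x ⟶ y) (hf : G.d f = (1, 0)) (hg : G.d g = (1, 0)) :
    f = g := by
  have h := D.uniq1 (D.ob.symm x) (D.ob.symm y)
    (eqToHom (D.ob.apply_symm_apply x) ≫ f ≫ eqToHom (D.ob.apply_symm_apply y).symm)
    (eqToHom (D.ob.apply_symm_apply x) ≫ g ≫ eqToHom (D.ob.apply_symm_apply y).symm)
    (by simp [G.d_comp, G.d_eqToHom, hf]) (by simp [G.d_comp, G.d_eqToHom, hg])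
  simpa using congrArg (fun t => eqToHom (D.ob.apply_symm_apply x).symm ≫ t ≫
    eqToHom (D.ob.apply_symm_apply y)) h

lemma uniq2' (D : DT G T) {x y : Λ} (f g : x ⟶ y) (hf : G.d f = (0, 1)) (hg : G.d g = (0, 1)) :
    f = g := by
  have h := D.uniq2 (D.ob.symm x) (D.ob.symm y)
    (eqToHom (D.ob.apply_symm_apply x) ≫ f ≫ eqToHom (D.ob.apply_symm_apply y).symm)
    (eqToHom (D.ob.apply_symm_apply x) ≫ g ≫ eqToHom (D.ob.apply_symm_apply y).symm)
    (by simp [G.d_comp, G.d_eqToHom, hf]) (by simp [G.d_comp, G.d_eqToHom, hg])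
  simpa using congrArg (fun t => eqToHom (D.ob.apply_symm_apply x).symm ≫ t ≫
    eqToHom (D.ob.apply_symm_apply y)) h

end DT

/-- Bundled form of `TripleEquiv`. -/
structure TEq {V : Type*} [Fintype V] [DecidableEq V] (T₁ T₂ : Triple V) where
  σ : Equiv.Perm V
  he1 : ∀ p : V × V, p ∈ T₂.E₁ ↔ (σ p.1, σ p.2) ∈ T₁.E₁
  he2 : ∀ p : V × V, p ∈ T₂.E₂ ↔ (σ p.1, σ p.2) ∈ T₁.E₂
  hθ : ∀ x : (V × V) × (V × V), x.1 ∈ T₂.E₁ → x.2 ∈ T₂.E₂ → x.1.1 = x.2.2 →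
      T₁.θ ((σ x.1.1, σ x.1.2), (σ x.2.1, σ x.2.2)) =
        ((σ (T₂.θ x).1.1, σ (T₂.θ x).1.2), (σ (T₂.θ x).2.1, σ (T₂.θ x).2.2))
section Builder

variable {V : Type*} [Fintype V] [DecidableEq V]
  {Λ₁ Λ₂ : Type*} [Category Λ₁] [Category Λ₂]
  {G₁ : TwoGraphStr Λ₁} {G₂ : TwoGraphStr Λ₂} {T₁ T₂ : Triple V}

/-- The object part of the functor built from a triple equivalence. -/
abbrev Fobj (D₁ : DT G₁ T₁) (D₂ : DT G₂ T₂) (E : TEq T₁ T₂) (x : Λ₁) : Λ₂ :=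
  D₂.ob (E.σ.symm (D₁.ob.symm x))

lemma exists_edge1 (D₁ : DT G₁ T₁) (D₂ : DT G₂ T₂) (E : TEq T₁ T₂)
    {x y : Λ₁} (e : x ⟶ y) (he : G₁.d e = (1, 0)) :
    ∃ f : Fobj D₁ D₂ E x ⟶ Fobj D₁ D₂ E y, G₂.d f = (1, 0) := by
  have h := D₁.mem1_of_hom e he
  have h2 : (E.σ.symm (D₁.ob.symm x), E.σ.symm (D₁.ob.symm y)) ∈ T₂.E₁ := by
    rw [E.he1]; simpa using h
  exact (D₂.mem1 _ _).mp h2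

lemma exists_edge2 (D₁ : DT G₁ T₁) (D₂ : DT G₂ T₂) (E : TEq T₁ T₂)
    {x y : Λ₁} (e : x ⟶ y) (he : G₁.d e = (0, 1)) :
    ∃ f : Fobj D₁ D₂ E x ⟶ Fobj D₁ D₂ E y, G₂.d f = (0, 1) := by
  have h := D₁.mem2_of_hom e he
  have h2 : (E.σ.symm (D₁.ob.symm x), E.σ.symm (D₁.ob.symm y)) ∈ T₂.E₂ := by
    rw [E.he2]; simpa using h
  exact (D₂.mem2 _ _).mp h2

noncomputable def edgeMap1 (D₁ : DT G₁ T₁) (D₂ : DT G₂ T₂) (E : TEq T₁ T₂)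
    {x y : Λ₁} (e : x ⟶ y) (he : G₁.d e = (1, 0)) :
    Fobj D₁ D₂ E x ⟶ Fobj D₁ D₂ E y :=
  (exists_edge1 D₁ D₂ E e he).choose

lemma edgeMap1_d (D₁ : DT G₁ T₁) (D₂ : DT G₂ T₂) (E : TEq T₁ T₂)
    {x y : Λ₁} (e : x ⟶ y) (he : G₁.d e = (1, 0)) :
    G₂.d (edgeMap1 D₁ D₂ E e he) = (1, 0) :=
  (exists_edge1 D₁ D₂ E e he).choose_spec

noncomputable def edgeMap2 (D₁ : DT G₁ T₁) (D₂ : DT G₂ T₂) (E : TEq T₁ T₂)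
    {x y : Λ₁} (e : x ⟶ y) (he : G₁.d e = (0, 1)) :
    Fobj D₁ D₂ E x ⟶ Fobj D₁ D₂ E y :=
  (exists_edge2 D₁ D₂ E e he).choose

lemma edgeMap2_d (D₁ : DT G₁ T₁) (D₂ : DT G₂ T₂) (E : TEq T₁ T₂)
    {x y : Λ₁} (e : x ⟶ y) (he : G₁.d e = (0, 1)) :
    G₂.d (edgeMap2 D₁ D₂ E e he) = (0, 1) :=
  (exists_edge2 D₁ D₂ E e he).choose_spec

end Builder
namespace DT

variable {V : Type*} [Fintype V] [DecidableEq V]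
  {Λ : Type*} [Category Λ] {G : TwoGraphStr Λ} {T : Triple V}

lemma swap_of_theta (D : DT G T) {a b c m : V}
    (hE1 : (b, c) ∈ T.E₁) (hE2 : (a, b) ∈ T.E₂)
    (hθ : T.θ ((b, c), (a, b)) = ((m, c), (a, m)))
    (me : D.ob b ⟶ D.ob c) (mf : D.ob a ⟶ D.ob b)
    (me' : D.ob a ⟶ D.ob m) (mf' : D.ob m ⟶ D.ob c)
    (dme : G.d me = (1, 0)) (dmf : G.d mf = (0, 1))
    (dme' : G.d me' = (1, 0)) (dmf' : G.d mf' = (0, 1)) :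
    mf ≫ me = me' ≫ mf' := by
  have hc : ((b, c), (a, b)).1.1 = ((b, c), (a, b)).2.2 := rfl
  have h21 : (T.θ ((b, c), (a, b))).2.1 = a := by rw [hθ]
  have h22 : (T.θ ((b, c), (a, b))).2.2 = m := by rw [hθ]
  have h11 : (T.θ ((b, c), (a, b))).1.1 = m := by rw [hθ]
  have h12 : (T.θ ((b, c), (a, b))).1.2 = c := by rw [hθ]
  have key := D.theta ((b, c), (a, b)) hE1 hE2 hc me mf
    (eqToHom (congrArg D.ob h21) ≫ me' ≫ eqToHom (congrArg D.ob h22.symm))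
    (eqToHom (congrArg D.ob h11) ≫ mf' ≫ eqToHom (congrArg D.ob h12.symm))
    dme dmf
    (by simp [G.d_comp, G.d_eqToHom, dme'])
    (by simp [G.d_comp, G.d_eqToHom, dmf'])
  simpa using key

lemma theta_eq (D : DT G T) {x y z w : Λ}
    (f2 : x ⟶ y) (e : y ⟶ z) (e' : x ⟶ w) (f2' : w ⟶ z)
    (hf2 : G.d f2 = (0, 1)) (he : G.d e = (1, 0))
    (he' : G.d e' = (1, 0)) (hf2' : G.d f2' = (0, 1))
    (hcomp : f2 ≫ e = e' ≫ f2') :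
    T.θ ((D.ob.symm y, D.ob.symm z), (D.ob.symm x, D.ob.symm y)) =
      ((D.ob.symm w, D.ob.symm z), (D.ob.symm x, D.ob.symm w)) := by
  have hE1 : ((D.ob.symm y, D.ob.symm z) : V × V) ∈ T.E₁ := D.mem1_of_hom e he
  have hE2 : ((D.ob.symm x, D.ob.symm y) : V × V) ∈ T.E₂ := D.mem2_of_hom f2 hf2
  set p : (V × V) × (V × V) := ((D.ob.symm y, D.ob.symm z), (D.ob.symm x, D.ob.symm y))
    with hp
  have hc : p.1.1 = p.2.2 := rfl
  have compat := T.θ_compat p hE1 hE2 hc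
  obtain ⟨me'0, dme'0⟩ := (D.mem1 (T.θ p).2.1 (T.θ p).2.2).mp compat.2.1
  obtain ⟨mf'0, dmf'0⟩ := (D.mem2 (T.θ p).1.1 (T.θ p).1.2).mp compat.1
  have key := D.theta p hE1 hE2 hc
    (eqToHom (D.ob.apply_symm_apply y) ≫ e ≫ eqToHom (D.ob.apply_symm_apply z).symm)
    (eqToHom (D.ob.apply_symm_apply x) ≫ f2 ≫ eqToHom (D.ob.apply_symm_apply y).symm)
    me'0 mf'0
    (by simp [G.d_comp, G.d_eqToHom, he]) (by simp [G.d_comp, G.d_eqToHom, hf2])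
    dme'0 dmf'0
  -- the composite morphism
  have hPQ := G.factor_unique (f := (eqToHom (D.ob.apply_symm_apply x) ≫ f2 ≫
        eqToHom (D.ob.apply_symm_apply y).symm) ≫ eqToHom (congrArg D.ob hc.symm) ≫
        (eqToHom (D.ob.apply_symm_apply y) ≫ e ≫ eqToHom (D.ob.apply_symm_apply z).symm))
    (m := (1, 0)) (n := (0, 1))
    ⟨D.ob (T.θ p).2.2,
      eqToHom (congrArg D.ob (T.θ_compat p hE1 hE2 hc).2.2.2.2.symm) ≫ me'0,
      eqToHom (congrArg D.ob (T.θ_compat p hE1 hE2 hc).2.2.1.symm) ≫ mf'0 ≫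
        eqToHom (congrArg D.ob (T.θ_compat p hE1 hE2 hc).2.2.2.1)⟩
    ⟨D.ob (D.ob.symm w),
      eqToHom (D.ob.apply_symm_apply x) ≫ e' ≫ eqToHom (D.ob.apply_symm_apply w).symm,
      eqToHom (D.ob.apply_symm_apply w) ≫ f2' ≫ eqToHom (D.ob.apply_symm_apply z).symm⟩
    ⟨by simp [G.d_comp, G.d_eqToHom, dme'0],
     by simp [G.d_comp, G.d_eqToHom, dmf'0],
     by rw [key]; simp⟩
    ⟨by simp [G.d_comp, G.d_eqToHom, he'],
     by simp [G.d_comp, G.d_eqToHom, hf2'],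
     by simp [reassoc_of% hcomp]⟩
  have hmid : (T.θ p).2.2 = D.ob.symm w := by
    have := congrArg Sigma.fst hPQ
    simp only at this
    have := D.ob.injective this
    simpa using this
  have h11 : (T.θ p).1.1 = D.ob.symm w := compat.2.2.1.trans hmid
  have h12 : (T.θ p).1.2 = D.ob.symm z := compat.2.2.2.1
  have h21 : (T.θ p).2.1 = D.ob.symm x := compat.2.2.2.2
  simp only [Prod.ext_iff]
  exact ⟨⟨h11, h12⟩, h21, hmid⟩

end DT
section Builder2

variable {V : Type*} [Fintype V] [DecidableEq V]
  {Λ₁ Λ₂ : Type*} [Category Λ₁] [Category Λ₂]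
  {G₁ : TwoGraphStr Λ₁} {G₂ : TwoGraphStr Λ₂} {T₁ T₂ : Triple V}

lemma edge_swap (D₁ : DT G₁ T₁) (D₂ : DT G₂ T₂) (E : TEq T₁ T₂)
    {x y z w : Λ₁} (f2 : x ⟶ y) (e : y ⟶ z) (e' : x ⟶ w) (f2' : w ⟶ z)
    (hf2 : G₁.d f2 = (0, 1)) (he : G₁.d e = (1, 0))
    (he' : G₁.d e' = (1, 0)) (hf2' : G₁.d f2' = (0, 1))
    (hcomp : f2 ≫ e = e' ≫ f2') :
    edgeMap2 D₁ D₂ E f2 hf2 ≫ edgeMap1 D₁ D₂ E e he =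
      edgeMap1 D₁ D₂ E e' he' ≫ edgeMap2 D₁ D₂ E f2' hf2' := by
  have hθ1 := D₁.theta_eq f2 e e' f2' hf2 he he' hf2' hcomp
  have hbc : (E.σ.symm (D₁.ob.symm y), E.σ.symm (D₁.ob.symm z)) ∈ T₂.E₁ := by
    rw [E.he1]; simpa using D₁.mem1_of_hom e he
  have hab : (E.σ.symm (D₁.ob.symm x), E.σ.symm (D₁.ob.symm y)) ∈ T₂.E₂ := by
    rw [E.he2]; simpa using D₁.mem2_of_hom f2 hf2
  have htr := E.hθ ((E.σ.symm (D₁.ob.symm y), E.σ.symm (D₁.ob.symm z)),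
      (E.σ.symm (D₁.ob.symm x), E.σ.symm (D₁.ob.symm y))) hbc hab rfl
  simp only [Equiv.apply_symm_apply] at htr
  rw [hθ1] at htr
  have hθ2 := congrArg (fun q : (V × V) × (V × V) =>
    ((E.σ.symm q.1.1, E.σ.symm q.1.2), (E.σ.symm q.2.1, E.σ.symm q.2.2))) htr
  simp only [Equiv.symm_apply_apply, Prod.mk.eta] at hθ2
  exact D₂.swap_of_theta hbc hab hθ2.symm
    (edgeMap1 D₁ D₂ E e he) (edgeMap2 D₁ D₂ E f2 hf2)
    (edgeMap1 D₁ D₂ E e' he') (edgeMap2 D₁ D₂ E f2' hf2')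
    (edgeMap1_d D₁ D₂ E e he) (edgeMap2_d D₁ D₂ E f2 hf2)
    (edgeMap1_d D₁ D₂ E e' he') (edgeMap2_d D₁ D₂ E f2' hf2')

end Builder2
section Builder3

variable {V : Type*} [Fintype V] [DecidableEq V]
  {Λ₁ Λ₂ : Type*} [Category Λ₁] [Category Λ₂]
  {G₁ : TwoGraphStr Λ₁} {G₂ : TwoGraphStr Λ₂} {T₁ T₂ : Triple V}

/-- The morphism part of the functor, by recursion on the total degree. -/
noncomputable def Fmap (D₁ : DT G₁ T₁) (D₂ : DT G₂ T₂) (E : TEq T₁ T₂) :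
    ∀ (n : ℕ) {x y : Λ₁} (f : x ⟶ y), (G₁.d f).1 + (G₁.d f).2 = n →
      (Fobj D₁ D₂ E x ⟶ Fobj D₁ D₂ E y)
  | 0, _, _, f, hn =>
      eqToHom (congrArg (Fobj D₁ D₂ E)
        (G₁.exists_eq_of_d_eq_zero f
          (by rw [Prod.ext_iff]; constructor <;> simp <;> omega)).choose)
  | (n + 1), _, _, f, hn =>
      if h : 1 ≤ (G₁.d f).1 then
        edgeMap1 D₁ D₂ E (G₁.strip1 f h).choose.2.1 (G₁.strip1 f h).choose_spec.1 ≫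
          Fmap D₁ D₂ E n (G₁.strip1 f h).choose.2.2
            (by rw [(G₁.strip1 f h).choose_spec.2.1]; simp; omega)
      else
        edgeMap2 D₁ D₂ E (G₁.strip2 f (by omega)).choose.2.1
            (G₁.strip2 f (by omega)).choose_spec.1 ≫
          Fmap D₁ D₂ E n (G₁.strip2 f (by omega)).choose.2.2
            (by rw [(G₁.strip2 f (by omega)).choose_spec.2.1]; simp; omega)

lemma Fmap_congr (D₁ : DT G₁ T₁) (D₂ : DT G₂ T₂) (E : TEq T₁ T₂)
    {n n' : ℕ} {x y : Λ₁} {f f' : x ⟶ y} (hff : f = f')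
    (hn : (G₁.d f).1 + (G₁.d f).2 = n) (hn' : (G₁.d f').1 + (G₁.d f').2 = n') :
    Fmap D₁ D₂ E n f hn = Fmap D₁ D₂ E n' f' hn' := by
  subst hff
  obtain rfl : n = n' := hn.symm.trans hn'
  rfl

lemma Fmap_id (D₁ : DT G₁ T₁) (D₂ : DT G₂ T₂) (E : TEq T₁ T₂)
    (x : Λ₁) {n : ℕ} (hn : (G₁.d (𝟙 x)).1 + (G₁.d (𝟙 x)).2 = n) :
    Fmap D₁ D₂ E n (𝟙 x) hn = 𝟙 _ := by
  obtain rfl : n = 0 := by rw [← hn, G₁.d_id]; rfl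
  simp only [Fmap]
  simp

lemma Fmap_cons1 (D₁ : DT G₁ T₁) (D₂ : DT G₂ T₂) (E : TEq T₁ T₂)
    {n : ℕ} {x y z : Λ₁} (e : x ⟶ y) (g : y ⟶ z)
    (he : G₁.d e = (1, 0)) (hn : (G₁.d (e ≫ g)).1 + (G₁.d (e ≫ g)).2 = n + 1)
    (hg : (G₁.d g).1 + (G₁.d g).2 = n) :
    Fmap D₁ D₂ E (n + 1) (e ≫ g) hn =
      edgeMap1 D₁ D₂ E e he ≫ Fmap D₁ D₂ E n g hg := by
  have hpos : 1 ≤ (G₁.d (e ≫ g)).1 := by rw [G₁.d_comp, he]; simp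
  have key : ∀ (P : Σ y' : Λ₁, (x ⟶ y') × (y' ⟶ z)) (h1 : G₁.d P.2.1 = (1, 0))
      (h2 : (G₁.d P.2.2).1 + (G₁.d P.2.2).2 = n), P = ⟨y, (e, g)⟩ →
      edgeMap1 D₁ D₂ E P.2.1 h1 ≫ Fmap D₁ D₂ E n P.2.2 h2 =
        edgeMap1 D₁ D₂ E e he ≫ Fmap D₁ D₂ E n g hg := by
    rintro ⟨y', e0, g0⟩ h1 h2 hP
    obtain ⟨rfl, hpair⟩ := Sigma.mk.inj_iff.mp hP
    obtain ⟨rfl, rfl⟩ := Prod.mk_inj.mp (heq_iff_eq.mp hpair)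
    rfl
  simp only [Fmap]
  rw [dif_pos hpos]
  refine key _ _ _ (G₁.factor_unique _ _
    ⟨(G₁.strip1 (e ≫ g) hpos).choose_spec.1,
     (G₁.strip1 (e ≫ g) hpos).choose_spec.2.1,
     (G₁.strip1 (e ≫ g) hpos).choose_spec.2.2⟩
    ⟨he, ?_, rfl⟩)
  rw [Prod.ext_iff]
  constructor <;> simp [G₁.d_comp, he]

lemma Fmap_cons2 (D₁ : DT G₁ T₁) (D₂ : DT G₂ T₂) (E : TEq T₁ T₂)
    {n : ℕ} {x y z : Λ₁} (e : x ⟶ y) (g : y ⟶ z)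
    (he : G₁.d e = (0, 1)) (hz : (G₁.d (e ≫ g)).1 = 0)
    (hn : (G₁.d (e ≫ g)).1 + (G₁.d (e ≫ g)).2 = n + 1)
    (hg : (G₁.d g).1 + (G₁.d g).2 = n) :
    Fmap D₁ D₂ E (n + 1) (e ≫ g) hn =
      edgeMap2 D₁ D₂ E e he ≫ Fmap D₁ D₂ E n g hg := by
  have hneg : ¬ 1 ≤ (G₁.d (e ≫ g)).1 := by omega
  have key : ∀ (P : Σ y' : Λ₁, (x ⟶ y') × (y' ⟶ z)) (h1 : G₁.d P.2.1 = (0, 1))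
      (h2 : (G₁.d P.2.2).1 + (G₁.d P.2.2).2 = n), P = ⟨y, (e, g)⟩ →
      edgeMap2 D₁ D₂ E P.2.1 h1 ≫ Fmap D₁ D₂ E n P.2.2 h2 =
        edgeMap2 D₁ D₂ E e he ≫ Fmap D₁ D₂ E n g hg := by
    rintro ⟨y', e0, g0⟩ h1 h2 hP
    obtain ⟨rfl, hpair⟩ := Sigma.mk.inj_iff.mp hP
    obtain ⟨rfl, rfl⟩ := Prod.mk_inj.mp (heq_iff_eq.mp hpair)
    rfl
  simp only [Fmap]
  rw [dif_neg hneg]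
  refine key _ _ _ (G₁.factor_unique _ _
    ⟨(G₁.strip2 (e ≫ g) (by omega)).choose_spec.1,
     (G₁.strip2 (e ≫ g) (by omega)).choose_spec.2.1,
     (G₁.strip2 (e ≫ g) (by omega)).choose_spec.2.2⟩
    ⟨he, ?_, rfl⟩)
  rw [Prod.ext_iff]
  constructor <;> simp [G₁.d_comp, he]

end Builder3
section Builder4

variable {V : Type*} [Fintype V] [DecidableEq V]
  {Λ₁ Λ₂ : Type*} [Category Λ₁] [Category Λ₂]
  {G₁ : TwoGraphStr Λ₁} {G₂ : TwoGraphStr Λ₂} {T₁ T₂ : Triple V}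

lemma Fmap_d (D₁ : DT G₁ T₁) (D₂ : DT G₂ T₂) (E : TEq T₁ T₂) :
    ∀ (n : ℕ) {x y : Λ₁} (f : x ⟶ y) (hn : (G₁.d f).1 + (G₁.d f).2 = n),
      G₂.d (Fmap D₁ D₂ E n f hn) = G₁.d f := by
  intro n
  induction n with
  | zero =>
    intro x y f hn
    have hdf : G₁.d f = 0 := by rw [Prod.ext_iff]; constructor <;> simp <;> omega
    simp only [Fmap]
    rw [G₂.d_eqToHom, hdf]
  | succ n ih =>
    intro x y f hn
    by_cases h : 1 ≤ (G₁.d f).1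
    · simp only [Fmap]
      rw [dif_pos h, G₂.d_comp, edgeMap1_d, ih, (G₁.strip1 f h).choose_spec.2.1]
      rw [Prod.ext_iff]
      constructor <;> simp <;> omega
    · simp only [Fmap]
      rw [dif_neg h, G₂.d_comp, edgeMap2_d, ih, (G₁.strip2 f (by omega)).choose_spec.2.1]
      rw [Prod.ext_iff]
      constructor <;> simp <;> omega

lemma Fmap_cons2' (D₁ : DT G₁ T₁) (D₂ : DT G₂ T₂) (E : TEq T₁ T₂) :
    ∀ (n : ℕ) {x y z : Λ₁} (e : x ⟶ y) (g : y ⟶ z) (he : G₁.d e = (0, 1))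
      (hn : (G₁.d (e ≫ g)).1 + (G₁.d (e ≫ g)).2 = n + 1)
      (hg : (G₁.d g).1 + (G₁.d g).2 = n),
      Fmap D₁ D₂ E (n + 1) (e ≫ g) hn =
        edgeMap2 D₁ D₂ E e he ≫ Fmap D₁ D₂ E n g hg := by
  intro n
  induction n with
  | zero =>
    intro x y z e g he hn hg
    exact Fmap_cons2 D₁ D₂ E e g he (by simp [G₁.d_comp, he]; omega) hn hg
  | succ n ih =>
    intro x y z e g he hn hg
    by_cases hz : (G₁.d g).1 = 0
    · exact Fmap_cons2 D₁ D₂ E e g he (by simp [G₁.d_comp, he, hz]) hn hg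
    · have h1 : 1 ≤ (G₁.d g).1 := by omega
      obtain ⟨⟨w, e₁, k⟩, he₁, hk, hek⟩ := G₁.strip1 g h1
      dsimp only at he₁ hk hek
      obtain ⟨⟨w₀, e₀, h₀⟩, ⟨he₀, hh₀, hcmp⟩, -⟩ :=
        G₁.factor (e ≫ e₁) (1, 0) (0, 1) (by rw [G₁.d_comp, he, he₁]; rfl)
      dsimp only at he₀ hh₀ hcmp
      have hkey : e ≫ g = e₀ ≫ (h₀ ≫ k) := by
        rw [← hek, ← Category.assoc, ← hcmp, Category.assoc]
      have hk1 : (G₁.d k).1 = (G₁.d g).1 - 1 := by rw [hk]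
      have hk2 : (G₁.d k).2 = (G₁.d g).2 := by rw [hk]
      have hsumk : (G₁.d k).1 + (G₁.d k).2 = n := by omega
      have hsum_h₀k : (G₁.d (h₀ ≫ k)).1 + (G₁.d (h₀ ≫ k)).2 = n + 1 := by
        rw [G₁.d_comp, hh₀]; simp; omega
      have haux : (G₁.d (e₀ ≫ (h₀ ≫ k))).1 + (G₁.d (e₀ ≫ (h₀ ≫ k))).2 = n + 1 + 1 := by
        rw [← hkey]; exact hn
      rw [Fmap_congr D₁ D₂ E hkey hn haux]
      rw [Fmap_cons1 D₁ D₂ E e₀ (h₀ ≫ k) he₀ haux hsum_h₀k]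
      rw [ih h₀ k hh₀ hsum_h₀k hsumk]
      rw [← Category.assoc]
      rw [← edge_swap D₁ D₂ E e e₁ e₀ h₀ he he₁ he₀ hh₀ hcmp.symm]
      rw [Category.assoc]
      rw [← Fmap_cons1 D₁ D₂ E e₁ k he₁ (by rw [hek]; exact hg) hsumk]
      rw [Fmap_congr D₁ D₂ E hek (by rw [hek]; exact hg) hg]

lemma Fmap_eqToHom (D₁ : DT G₁ T₁) (D₂ : DT G₂ T₂) (E : TEq T₁ T₂)
    {x y : Λ₁} (h : x = y) {n : ℕ}
    (hn : (G₁.d (eqToHom h)).1 + (G₁.d (eqToHom h)).2 = n) :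
    Fmap D₁ D₂ E n (eqToHom h) hn = eqToHom (congrArg (Fobj D₁ D₂ E) h) := by
  subst h
  rw [Fmap_congr D₁ D₂ E (show (eqToHom rfl : x ⟶ x) = 𝟙 x by simp) hn
    (by simpa [G₁.d_id] using hn)]
  rw [Fmap_id D₁ D₂ E x]
  simp

lemma Fmap_eqToHom_comp (D₁ : DT G₁ T₁) (D₂ : DT G₂ T₂) (E : TEq T₁ T₂)
    {x y z : Λ₁} (h : x = y) (g : y ⟶ z) {n ng : ℕ}
    (hn : (G₁.d (eqToHom h ≫ g)).1 + (G₁.d (eqToHom h ≫ g)).2 = n)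
    (hg : (G₁.d g).1 + (G₁.d g).2 = ng) :
    Fmap D₁ D₂ E n (eqToHom h ≫ g) hn =
      eqToHom (congrArg (Fobj D₁ D₂ E) h) ≫ Fmap D₁ D₂ E ng g hg := by
  subst h
  rw [Fmap_congr D₁ D₂ E (show (eqToHom rfl : x ⟶ x) ≫ g = g by simp) hn hg]
  simp

lemma Fmap_comp (D₁ : DT G₁ T₁) (D₂ : DT G₂ T₂) (E : TEq T₁ T₂) :
    ∀ (nf : ℕ) {x y z : Λ₁} (f : x ⟶ y) (g : y ⟶ z) (n ng : ℕ)
      (hn : (G₁.d (f ≫ g)).1 + (G₁.d (f ≫ g)).2 = n)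
      (hf : (G₁.d f).1 + (G₁.d f).2 = nf) (hg : (G₁.d g).1 + (G₁.d g).2 = ng),
      Fmap D₁ D₂ E n (f ≫ g) hn = Fmap D₁ D₂ E nf f hf ≫ Fmap D₁ D₂ E ng g hg := by
  intro nf
  induction nf with
  | zero =>
    intro x y z f g n ng hn hf hg
    have hdf : G₁.d f = 0 := by rw [Prod.ext_iff]; constructor <;> simp <;> omega
    obtain ⟨h', hfe⟩ := G₁.exists_eq_of_d_eq_zero f hdf
    subst hfe
    rw [Fmap_eqToHom_comp D₁ D₂ E h' g hn hg, Fmap_eqToHom D₁ D₂ E h' hf]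
  | succ nf ih =>
    intro x y z f g n ng hn hf hg
    have hd := G₁.d_comp f g
    have hd1 : (G₁.d (f ≫ g)).1 = (G₁.d f).1 + (G₁.d g).1 := by rw [hd]; rfl
    have hd2 : (G₁.d (f ≫ g)).2 = (G₁.d f).2 + (G₁.d g).2 := by rw [hd]; rfl
    obtain rfl : n = (nf + ng) + 1 := by omega
    by_cases hz : 1 ≤ (G₁.d f).1
    · obtain ⟨⟨w, e, f₁⟩, he, hf₁, hef⟩ := G₁.strip1 f hz
      have hq1 : (G₁.d f₁).1 = (G₁.d f).1 - 1 := by rw [hf₁]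
      have hq2 : (G₁.d f₁).2 = (G₁.d f).2 := by rw [hf₁]
      have hsumf₁ : (G₁.d f₁).1 + (G₁.d f₁).2 = nf := by omega
      have hfg : f ≫ g = e ≫ (f₁ ≫ g) := by rw [← hef, Category.assoc]
      have haux : (G₁.d (e ≫ (f₁ ≫ g))).1 + (G₁.d (e ≫ (f₁ ≫ g))).2 = (nf + ng) + 1 := by
        rw [← hfg]; omega
      have haux2 : (G₁.d (f₁ ≫ g)).1 + (G₁.d (f₁ ≫ g)).2 = nf + ng := by
        rw [G₁.d_comp]; simp [Prod.fst_add, Prod.snd_add]; omega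
      rw [Fmap_congr D₁ D₂ E hfg hn haux]
      rw [Fmap_cons1 D₁ D₂ E e (f₁ ≫ g) he haux haux2]
      rw [ih f₁ g (nf + ng) ng haux2 hsumf₁ hg]
      rw [← Category.assoc]
      rw [← Fmap_cons1 D₁ D₂ E e f₁ he (by rw [hef]; exact hf) hsumf₁]
      rw [Fmap_congr D₁ D₂ E hef (by rw [hef]; exact hf) hf]
    · obtain ⟨⟨w, e, f₁⟩, he, hf₁, hef⟩ := G₁.strip2 f (by omega)
      have hq1 : (G₁.d f₁).1 = (G₁.d f).1 := by rw [hf₁]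
      have hq2 : (G₁.d f₁).2 = (G₁.d f).2 - 1 := by rw [hf₁]
      have hsumf₁ : (G₁.d f₁).1 + (G₁.d f₁).2 = nf := by omega
      have hfg : f ≫ g = e ≫ (f₁ ≫ g) := by rw [← hef, Category.assoc]
      have haux : (G₁.d (e ≫ (f₁ ≫ g))).1 + (G₁.d (e ≫ (f₁ ≫ g))).2 = (nf + ng) + 1 := by
        rw [← hfg]; omega
      have haux2 : (G₁.d (f₁ ≫ g)).1 + (G₁.d (f₁ ≫ g)).2 = nf + ng := by
        rw [G₁.d_comp]; simp [Prod.fst_add, Prod.snd_add]; omega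
      rw [Fmap_congr D₁ D₂ E hfg hn haux]
      rw [Fmap_cons2' D₁ D₂ E (nf + ng) e (f₁ ≫ g) he haux haux2]
      rw [ih f₁ g (nf + ng) ng haux2 hsumf₁ hg]
      rw [← Category.assoc]
      rw [← Fmap_cons2' D₁ D₂ E nf e f₁ he (by rw [hef]; exact hf) hsumf₁]
      rw [Fmap_congr D₁ D₂ E hef (by rw [hef]; exact hf) hf]

end Builder4
section Builder5

variable {V : Type*} [Fintype V] [DecidableEq V]
  {Λ₁ Λ₂ : Type*} [Category Λ₁] [Category Λ₂]
  {G₁ : TwoGraphStr Λ₁} {G₂ : TwoGraphStr Λ₂} {T₁ T₂ : Triple V}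

/-- The functor associated to a triple equivalence. -/
noncomputable def Φfun (D₁ : DT G₁ T₁) (D₂ : DT G₂ T₂) (E : TEq T₁ T₂) : Λ₁ ⥤ Λ₂ where
  obj := Fobj D₁ D₂ E
  map {x y} f := Fmap D₁ D₂ E ((G₁.d f).1 + (G₁.d f).2) f rfl
  map_id x := Fmap_id D₁ D₂ E x rfl
  map_comp {x y z} f g := Fmap_comp D₁ D₂ E _ f g _ _ rfl rfl rfl

lemma Φfun_d (D₁ : DT G₁ T₁) (D₂ : DT G₂ T₂) (E : TEq T₁ T₂)
    {x y : Λ₁} (f : x ⟶ y) : G₂.d ((Φfun D₁ D₂ E).map f) = G₁.d f :=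
  Fmap_d D₁ D₂ E _ f rfl

lemma Φfun_obj (D₁ : DT G₁ T₁) (D₂ : DT G₂ T₂) (E : TEq T₁ T₂) (x : Λ₁) :
    (Φfun D₁ D₂ E).obj x = D₂.ob (E.σ.symm (D₁.ob.symm x)) := rfl

/-- A triple equivalence can be inverted. -/
def TEq.symm (E : TEq T₁ T₂) : TEq T₂ T₁ where
  σ := E.σ.symm
  he1 p := by simpa using (E.he1 (E.σ.symm p.1, E.σ.symm p.2)).symm
  he2 p := by simpa using (E.he2 (E.σ.symm p.1, E.σ.symm p.2)).symm
  hθ x hx1 hx2 hc := by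
    have h := E.hθ ((E.σ.symm x.1.1, E.σ.symm x.1.2), (E.σ.symm x.2.1, E.σ.symm x.2.2))
      (by rw [E.he1]; simpa using hx1) (by rw [E.he2]; simpa using hx2)
      (by simpa using congrArg E.σ.symm hc)
    simp only [Equiv.apply_symm_apply, Prod.mk.eta] at h
    have h2 := congrArg (fun q : (V × V) × (V × V) =>
      ((E.σ.symm q.1.1, E.σ.symm q.1.2), (E.σ.symm q.2.1, E.σ.symm q.2.2))) h
    simp only [Equiv.symm_apply_apply, Prod.mk.eta] at h2
    exact h2.symm

end Builder5

/-- Two degree-preserving functors from a 2-graph to a 2-graph with unique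
degree-(1,0) and degree-(0,1) morphisms agree as soon as they agree on objects. -/
lemma functor_eq_of_deg {Λ Λ' : Type*} [Category Λ] [Category Λ']
    (G : TwoGraphStr Λ) (G' : TwoGraphStr Λ')
    (hu1 : ∀ {x y : Λ'} (f g : x ⟶ y), G'.d f = (1, 0) → G'.d g = (1, 0) → f = g)
    (hu2 : ∀ {x y : Λ'} (f g : x ⟶ y), G'.d f = (0, 1) → G'.d g = (0, 1) → f = g)
    (F H : Λ ⥤ Λ') (hobj : ∀ x, F.obj x = H.obj x)
    (hFd : ∀ {x y : Λ} (f : x ⟶ y), G'.d (F.map f) = G.d f)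
    (hHd : ∀ {x y : Λ} (f : x ⟶ y), G'.d (H.map f) = G.d f) : F = H := by
  have aux : ∀ n : ℕ, ∀ {x y : Λ} (f : x ⟶ y), (G.d f).1 + (G.d f).2 = n →
      F.map f = eqToHom (hobj x) ≫ H.map f ≫ eqToHom (hobj y).symm := by
    intro n
    induction n with
    | zero =>
      intro x y f hn
      have hdf : G.d f = 0 := by rw [Prod.ext_iff]; constructor <;> simp <;> omega
      obtain ⟨h', hfe⟩ := G.exists_eq_of_d_eq_zero f hdf
      subst hfe
      subst h'
      simp
    | succ n ih =>
      intro x y f hn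
      by_cases hz : 1 ≤ (G.d f).1
      · obtain ⟨⟨w, e, f₁⟩, he, hf₁, hef⟩ := G.strip1 f hz
        dsimp only at he hf₁ hef
        subst hef
        have a1 : (G.d f₁).1 = (G.d (e ≫ f₁)).1 - 1 := by rw [hf₁]
        have a2 : (G.d f₁).2 = (G.d (e ≫ f₁)).2 := by rw [hf₁]
        have hsum : (G.d f₁).1 + (G.d f₁).2 = n := by omega
        rw [F.map_comp, H.map_comp]
        rw [ih f₁ hsum]
        have hedge : F.map e = eqToHom (hobj x) ≫ H.map e ≫ eqToHom (hobj w).symm :=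
          hu1 _ _ (by rw [hFd, he]) (by simp [G'.d_comp, G'.d_eqToHom, hHd, he])
        rw [hedge]
        simp
      · have hz2 : 1 ≤ (G.d f).2 := by omega
        obtain ⟨⟨w, e, f₁⟩, he, hf₁, hef⟩ := G.strip2 f hz2
        dsimp only at he hf₁ hef
        subst hef
        have a1 : (G.d f₁).1 = (G.d (e ≫ f₁)).1 := by rw [hf₁]
        have a2 : (G.d f₁).2 = (G.d (e ≫ f₁)).2 - 1 := by rw [hf₁]
        have hsum : (G.d f₁).1 + (G.d f₁).2 = n := by omega
        rw [F.map_comp, H.map_comp]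
        rw [ih f₁ hsum]
        have hedge : F.map e = eqToHom (hobj x) ≫ H.map e ≫ eqToHom (hobj w).symm :=
          hu2 _ _ (by rw [hFd, he]) (by simp [G'.d_comp, G'.d_eqToHom, hHd, he])
        rw [hedge]
        simp
  exact CategoryTheory.Functor.ext hobj (fun x y f => aux _ f rfl)

/-- Theorem A.1: two defining triples are equivalent if and only
if the associated 2-graphs are isomorphic as `ℕ²`-graded categories. -/
theorem stmt13 {V : Type*} [Fintype V] [DecidableEq V]
    {Λ₁ Λ₂ : Type*} [Category Λ₁] [Category Λ₂]
    (G₁ : TwoGraphStr Λ₁) (G₂ : TwoGraphStr Λ₂)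
    (T₁ T₂ : Triple V)
    (h₁ : IsDefiningTriple G₁ T₁) (h₂ : IsDefiningTriple G₂ T₂) :
    TripleEquiv T₁ T₂ ↔
      ∃ (Φ : Λ₁ ⥤ Λ₂) (Ψ : Λ₂ ⥤ Λ₁), Φ ⋙ Ψ = 𝟭 Λ₁ ∧ Ψ ⋙ Φ = 𝟭 Λ₂ ∧
        ∀ {x y : Λ₁} (f : x ⟶ y), G₂.d (Φ.map f) = G₁.d f := by
  obtain ⟨D₁⟩ := (isDefiningTriple_iff_nonempty_dt G₁ T₁).mp h₁
  obtain ⟨D₂⟩ := (isDefiningTriple_iff_nonempty_dt G₂ T₂).mp h₂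
  constructor
  · rintro ⟨σ, hA, hB, hC⟩
    have E : TEq T₁ T₂ := ⟨σ, hA, hB, hC⟩
    refine ⟨Φfun D₁ D₂ E, Φfun D₂ D₁ E.symm, ?_, ?_, ?_⟩
    · refine functor_eq_of_deg G₁ G₁ (fun f g => D₁.uniq1' f g) (fun f g => D₁.uniq2' f g)
        _ _ (fun x => ?_) (fun f => ?_) (fun f => rfl)
      · show D₁.ob (E.σ.symm.symm (D₂.ob.symm (D₂.ob (E.σ.symm (D₁.ob.symm x))))) = x
        simp
      · exact (Φfun_d D₂ D₁ E.symm _).trans (Φfun_d D₁ D₂ E f)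
    · refine functor_eq_of_deg G₂ G₂ (fun f g => D₂.uniq1' f g) (fun f g => D₂.uniq2' f g)
        _ _ (fun x => ?_) (fun f => ?_) (fun f => rfl)
      · show D₂.ob (E.σ.symm (D₁.ob.symm (D₁.ob (E.σ.symm.symm (D₂.ob.symm x))))) = x
        simp
      · exact (Φfun_d D₁ D₂ E _).trans (Φfun_d D₂ D₁ E.symm f)
    · intro x y f
      exact Φfun_d D₁ D₂ E f
  · rintro ⟨Φ, Ψ, hΦΨ, hΨΦ, hd⟩
    have objΨΦ : ∀ z : Λ₂, Φ.obj (Ψ.obj z) = z := fun z => Functor.congr_obj hΨΦ z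
    have objΦΨ : ∀ z : Λ₁, Ψ.obj (Φ.obj z) = z := fun z => Functor.congr_obj hΦΨ z
    have hΨd : ∀ {x y : Λ₂} (g : x ⟶ y), G₁.d (Ψ.map g) = G₂.d g := by
      intro x y g
      have hcong := Functor.congr_hom hΨΦ g
      have hsame : G₂.d ((Ψ ⋙ Φ).map g) = G₂.d g := by
        rw [hcong]; simp [G₂.d_comp, G₂.d_eqToHom]
      rw [← hsame]
      exact (hd (Ψ.map g)).symm
    refine ⟨⟨fun v => D₁.ob.symm (Ψ.obj (D₂.ob v)),
        fun v => D₂.ob.symm (Φ.obj (D₁.ob v)), ?_, ?_⟩, ?_, ?_, ?_⟩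
    · intro v
      show D₂.ob.symm (Φ.obj (D₁.ob (D₁.ob.symm (Ψ.obj (D₂.ob v))))) = v
      rw [Equiv.apply_symm_apply, objΨΦ, Equiv.symm_apply_apply]
    · intro v
      show D₁.ob.symm (Ψ.obj (D₂.ob (D₂.ob.symm (Φ.obj (D₁.ob v))))) = v
      rw [Equiv.apply_symm_apply, objΦΨ, Equiv.symm_apply_apply]
    · intro p
      constructor
      · intro hp
        obtain ⟨f, hf⟩ := (D₂.mem1 p.1 p.2).mp hp
        exact D₁.mem1_of_hom (Ψ.map f) (by rw [hΨd, hf])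
      · intro hp
        obtain ⟨g, hg⟩ := (D₁.mem1 _ _).mp hp
        refine (D₂.mem1 p.1 p.2).mpr
          ⟨eqToHom (show D₂.ob p.1 =
              Φ.obj (D₁.ob (D₁.ob.symm (Ψ.obj (D₂.ob p.1)))) by
                rw [Equiv.apply_symm_apply, objΨΦ]) ≫ Φ.map g ≫
            eqToHom (show Φ.obj (D₁.ob (D₁.ob.symm (Ψ.obj (D₂.ob p.2)))) =
              D₂.ob p.2 by rw [Equiv.apply_symm_apply, objΨΦ]), ?_⟩
        simp [G₂.d_comp, G₂.d_eqToHom, hd, hg]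
    · intro p
      constructor
      · intro hp
        obtain ⟨f, hf⟩ := (D₂.mem2 p.1 p.2).mp hp
        exact D₁.mem2_of_hom (Ψ.map f) (by rw [hΨd, hf])
      · intro hp
        obtain ⟨g, hg⟩ := (D₁.mem2 _ _).mp hp
        refine (D₂.mem2 p.1 p.2).mpr
          ⟨eqToHom (show D₂.ob p.1 =
              Φ.obj (D₁.ob (D₁.ob.symm (Ψ.obj (D₂.ob p.1)))) by
                rw [Equiv.apply_symm_apply, objΨΦ]) ≫ Φ.map g ≫
            eqToHom (show Φ.obj (D₁.ob (D₁.ob.symm (Ψ.obj (D₂.ob p.2)))) =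
              D₂.ob p.2 by rw [Equiv.apply_symm_apply, objΨΦ]), ?_⟩
        simp [G₂.d_comp, G₂.d_eqToHom, hd, hg]
    · intro x hx1 hx2 hc
      obtain ⟨me₂, dme₂⟩ := (D₂.mem1 x.1.1 x.1.2).mp hx1
      obtain ⟨mf₂, dmf₂⟩ := (D₂.mem2 x.2.1 x.2.2).mp hx2
      have compat := T₂.θ_compat x hx1 hx2 hc
      obtain ⟨me'₂, dme'₂⟩ := (D₂.mem1 (T₂.θ x).2.1 (T₂.θ x).2.2).mp compat.2.1
      obtain ⟨mf'₂, dmf'₂⟩ := (D₂.mem2 (T₂.θ x).1.1 (T₂.θ x).1.2).mp compat.1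
      have key₂ := D₂.theta x hx1 hx2 hc me₂ mf₂ me'₂ mf'₂ dme₂ dmf₂ dme'₂ dmf'₂
      have hAB : mf₂ ≫ eqToHom (congrArg D₂.ob hc.symm) ≫ me₂ =
          (eqToHom (congrArg D₂.ob compat.2.2.2.2.symm) ≫ me'₂ ≫
            eqToHom (congrArg D₂.ob compat.2.2.1.symm)) ≫
          (mf'₂ ≫ eqToHom (congrArg D₂.ob compat.2.2.2.1)) := by
        rw [key₂]; simp only [Category.assoc]
      have hθeq := D₁.theta_eq (Ψ.map mf₂)
        (Ψ.map (eqToHom (congrArg D₂.ob hc.symm) ≫ me₂))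
        (Ψ.map (eqToHom (congrArg D₂.ob compat.2.2.2.2.symm) ≫ me'₂ ≫
          eqToHom (congrArg D₂.ob compat.2.2.1.symm)))
        (Ψ.map (mf'₂ ≫ eqToHom (congrArg D₂.ob compat.2.2.2.1)))
        (by rw [hΨd, dmf₂])
        (by rw [hΨd]; simp [G₂.d_comp, G₂.d_eqToHom, dme₂])
        (by rw [hΨd]; simp [G₂.d_comp, G₂.d_eqToHom, dme'₂])
        (by rw [hΨd]; simp [G₂.d_comp, G₂.d_eqToHom, dmf'₂])
        (by rw [← Ψ.map_comp, ← Ψ.map_comp]; exact congrArg Ψ.map hAB)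
      rw [hc, compat.2.2.2.1, compat.2.2.2.2, ← compat.2.2.1]
      exact hθeq
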